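/- The space H = {(c, e, h) ∈ ℝ⁷ : c · e = 0, 2h‖c‖² − κ⁴(‖e‖² − 1) = 0} (κ > 0 fixed) is not homeomorphic to any finite-dimensional real topological vector space. -/

import Mathlib

noncomputable abbrev E3 := EuclideanSpace ℝ (Fin 3)

/-- The space of all Keplerian orbits, as a subspace of ℝ⁷. -/
def Hall (κ : ℝ) : Set (E3 × E3 × ℝ) :=
  {x | inner ℝ x.1 x.2.1 = (0 : ℝ) ∧ 2 * x.2.2 * ‖x.1‖ ^ 2 - κ ^ 4 * (‖x.2.1‖ ^ 2 - 1) = 0}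

open Metric Set Module

lemma hall_closed (κ : ℝ) : IsClosed (Hall κ) := by
  have h1 : IsClosed {x : E3 × E3 × ℝ | inner ℝ x.1 x.2.1 = (0:ℝ)} :=
    isClosed_eq (Continuous.inner continuous_fst (continuous_fst.comp continuous_snd)) continuous_const
  have h2 : IsClosed {x : E3 × E3 × ℝ | 2 * x.2.2 * ‖x.1‖ ^ 2 - κ ^ 4 * (‖x.2.1‖ ^ 2 - 1) = 0} :=
    isClosed_eq (by fun_prop) continuous_const
  exact h1.inter h2

lemma unit_mem (κ : ℝ) (e : E3) (he : ‖e‖ = 1) (t : ℝ) : ((0:E3), e, t) ∈ Hall κ := by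
  constructor
  · simp
  · simp [he]

lemma slice_compact (κ : ℝ) (hκ : 0 < κ) :
    IsCompact (Hall κ ∩ {x : E3 × E3 × ℝ | x.2.2 = -1}) := by
  apply Metric.isCompact_of_isClosed_isBounded
  · exact (hall_closed κ).inter (isClosed_eq (by fun_prop) continuous_const)
  · rw [Metric.isBounded_iff_subset_closedBall 0]
    refine ⟨max (κ^2) 1, fun x hx => ?_⟩
    obtain ⟨⟨-, heq⟩, hh⟩ := hx
    rw [mem_closedBall, dist_zero_right]
    rw [hh] at heq
    have hκ4 : 0 < κ ^ 4 := by positivity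
    have he2 : ‖x.2.1‖ ^ 2 ≤ 1 := by nlinarith [sq_nonneg ‖x.1‖]
    have hc2 : ‖x.1‖ ^ 2 ≤ (κ^2)^2 := by nlinarith [sq_nonneg ‖x.2.1‖]
    have he : ‖x.2.1‖ ≤ 1 := by nlinarith [norm_nonneg x.2.1]
    have hc : ‖x.1‖ ≤ κ^2 := by nlinarith [norm_nonneg x.1, sq_nonneg κ]
    have : ‖x‖ = max ‖x.1‖ (max ‖x.2.1‖ |x.2.2|) := by
      rw [Prod.norm_def, Prod.norm_def, Real.norm_eq_abs]
    rw [this, hh]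
    simp only [abs_neg, abs_one]
    exact max_le (hc.trans (le_max_left _ _)) (max_le (he.trans (le_max_right _ _)) (le_max_right _ _))

lemma compl_ball_connected {n : ℕ} (hn : 2 ≤ n) (R : ℝ) (hR : 0 ≤ R) :
    IsConnected ((Metric.closedBall (0 : EuclideanSpace ℝ (Fin n)) R)ᶜ) := by
  have hrank : 1 < Module.rank ℝ (EuclideanSpace ℝ (Fin n)) := by
    rw [← finrank_eq_rank, finrank_euclideanSpace_fin]
    exact_mod_cast hn.trans_lt' one_lt_two
  have hsph : IsConnected (Metric.sphere (0 : EuclideanSpace ℝ (Fin n)) 1) :=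
    isConnected_sphere hrank 0 zero_le_one
  have hIoi : IsConnected (Set.Ioi R) := isConnected_Ioi
  have hprod : IsConnected ((Set.Ioi R) ×ˢ (Metric.sphere (0 : EuclideanSpace ℝ (Fin n)) 1)) :=
    hIoi.prod hsph
  have himg : IsConnected ((fun p : ℝ × EuclideanSpace ℝ (Fin n) => p.1 • p.2) ''
      ((Set.Ioi R) ×ˢ (Metric.sphere (0 : EuclideanSpace ℝ (Fin n)) 1))) :=
    hprod.image _ (continuous_fst.smul continuous_snd).continuousOn
  convert himg using 1
  ext x
  simp only [Set.mem_compl_iff, Metric.mem_closedBall, dist_zero_right, not_le,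
    Set.mem_image, Set.mem_prod, Set.mem_Ioi, Metric.mem_sphere, dist_zero_right]
  constructor
  · intro hx
    refine ⟨(‖x‖, ‖x‖⁻¹ • x), ⟨hx, ?_⟩, ?_⟩
    · rw [norm_smul, norm_inv, Real.norm_eq_abs, abs_of_nonneg (norm_nonneg x),
        inv_mul_cancel₀ (by simp only [ne_eq, norm_eq_zero]; rintro rfl; simp at hx; linarith : ‖x‖ ≠ 0)]
    · rw [smul_smul, mul_inv_cancel₀ (by simp only [ne_eq, norm_eq_zero]; rintro rfl; simp at hx; linarith : ‖x‖ ≠ 0), one_smul]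
  · rintro ⟨⟨t, v⟩, ⟨ht, hv⟩, rfl⟩
    rw [norm_smul, hv, mul_one, Real.norm_eq_abs, abs_of_pos (hR.trans_lt ht)]
    exact ht

noncomputable def e1 : E3 := EuclideanSpace.single (0 : Fin 3) (1:ℝ)

lemma e1_norm : ‖e1‖ = 1 := by
  rw [e1, EuclideanSpace.norm_single]; norm_num

noncomputable def pt (κ t : ℝ) : ↥(Hall κ) := ⟨((0:E3), e1, t), unit_mem κ e1 e1_norm t⟩

lemma pt_norm (κ t : ℝ) : |t| ≤ ‖(pt κ t : E3 × E3 × ℝ)‖ := by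
  have : ‖(pt κ t : E3 × E3 × ℝ)‖ = max ‖(0:E3)‖ (max ‖e1‖ |t|) := by
    rw [Prod.norm_def, Prod.norm_def, Real.norm_eq_abs]; rfl
  rw [this]
  exact le_max_of_le_right (le_max_right _ _)

lemma not_in_compact (κ : ℝ) {s : Set ↥(Hall κ)} (hC : IsCompact s)
    (I : Set ℝ) (hI : ∀ r : ℝ, ∃ t ∈ I, r < |t|) (hpt : ∀ t ∈ I, pt κ t ∈ s) : False := by
  have himg : IsCompact (Subtype.val '' s) := hC.image continuous_subtype_val
  obtain ⟨r, hr⟩ := (Metric.isBounded_iff_subset_closedBall 0).mp himg.isBounded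
  obtain ⟨t, htI, htr⟩ := hI r
  have : (pt κ t : E3 × E3 × ℝ) ∈ Metric.closedBall 0 r :=
    hr ⟨pt κ t, hpt t htI, rfl⟩
  rw [Metric.mem_closedBall, dist_zero_right] at this
  linarith [pt_norm κ t]

lemma coord_continuous (κ : ℝ) : Continuous (fun x : ↥(Hall κ) => (x : E3 × E3 × ℝ).2.2) :=
  continuous_subtype_val.snd.snd

lemma case_ge2 (κ : ℝ) (hκ : 0 < κ) {n : ℕ} (hn : 2 ≤ n)
    (F : ↥(Hall κ) ≃ₜ EuclideanSpace ℝ (Fin n)) : False := by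
  set K : Set ↥(Hall κ) := {x | (x : E3 × E3 × ℝ).2.2 = -1} with hKdef
  have hKimg : Subtype.val '' K = Hall κ ∩ {x : E3 × E3 × ℝ | x.2.2 = -1} := by
    ext x
    constructor
    · rintro ⟨y, hy, rfl⟩; exact ⟨y.2, hy⟩
    · rintro ⟨hx1, hx2⟩; exact ⟨⟨x, hx1⟩, hx2, rfl⟩
  have hK : IsCompact K := by
    rw [Topology.IsEmbedding.subtypeVal.isCompact_iff, hKimg]
    exact slice_compact κ hκ
  have hFK : IsCompact (F '' K) := hK.image F.continuous
  obtain ⟨r, hr⟩ := (Metric.isBounded_iff_subset_closedBall 0).mp hFK.isBounded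
  set R := max r 0 with hRdef
  have hr' : F '' K ⊆ Metric.closedBall 0 R :=
    hr.trans (Metric.closedBall_subset_closedBall (le_max_left _ _))
  set U₁ : Set ↥(Hall κ) := {x | (x : E3 × E3 × ℝ).2.2 < -1} with hU1def
  set U₂ : Set ↥(Hall κ) := {x | -1 < (x : E3 × E3 × ℝ).2.2} with hU2def
  have hU₁ : IsOpen U₁ := isOpen_lt (coord_continuous κ) continuous_const
  have hU₂ : IsOpen U₂ := isOpen_lt continuous_const (coord_continuous κ)
  have hconn := compl_ball_connected hn R (le_max_right _ _)
  -- the complement of the ball is covered by the two disjoint open images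
  have hcover : (Metric.closedBall (0 : EuclideanSpace ℝ (Fin n)) R)ᶜ ⊆ F '' U₁ ∪ F '' U₂ := by
    intro x hx
    have hxK : F.symm x ∉ K := by
      intro hmem
      exact hx (hr' ⟨F.symm x, hmem, F.apply_symm_apply x⟩)
    rcases lt_or_gt_of_ne hxK with h | h
    · exact Or.inl ⟨F.symm x, h, F.apply_symm_apply x⟩
    · exact Or.inr ⟨F.symm x, h, F.apply_symm_apply x⟩
  have hdisj : F '' U₁ ∩ F '' U₂ = ∅ := by
    ext x
    simp only [Set.mem_inter_iff, Set.mem_image, Set.mem_empty_iff_false, iff_false]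
    rintro ⟨⟨a, ha, rfl⟩, ⟨b, hb, hba⟩⟩
    rw [F.injective hba] at hb
    simp only [hU1def, hU2def, Set.mem_setOf_eq] at ha hb
    linarith
  -- a connected set in the union of two disjoint opens lies in one of them
  have := hconn.isPreconnected
  rw [IsPreconnected] at this
  have key : ¬(((Metric.closedBall (0 : EuclideanSpace ℝ (Fin n)) R)ᶜ ∩ F '' U₁).Nonempty ∧
      ((Metric.closedBall (0 : EuclideanSpace ℝ (Fin n)) R)ᶜ ∩ F '' U₂).Nonempty) := by
    rintro ⟨h1, h2⟩
    obtain ⟨x, -, hx⟩ := this (F '' U₁) (F '' U₂) (F.isOpenMap U₁ hU₁) (F.isOpenMap U₂ hU₂)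
      hcover h1 h2
    rw [hdisj] at hx
    exact hx
  -- hence one side has image inside the ball, so it is contained in a compact set
  have hCcomp : IsCompact (F.symm '' Metric.closedBall (0 : EuclideanSpace ℝ (Fin n)) R) :=
    (isCompact_closedBall _ _).image F.symm.continuous
  have hside : ∀ U : Set ↥(Hall κ),
      ((Metric.closedBall (0 : EuclideanSpace ℝ (Fin n)) R)ᶜ ∩ F '' U) = ∅ →
      U ⊆ F.symm '' Metric.closedBall (0 : EuclideanSpace ℝ (Fin n)) R := by
    intro U hU x hx
    have : F x ∈ Metric.closedBall (0 : EuclideanSpace ℝ (Fin n)) R := by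
      by_contra hc
      have hmem : F x ∈ (Metric.closedBall (0 : EuclideanSpace ℝ (Fin n)) R)ᶜ ∩ F '' U :=
        ⟨hc, x, hx, rfl⟩
      rw [hU] at hmem
      exact hmem
    exact ⟨F x, this, F.symm_apply_apply x⟩
  rcases not_and_or.mp key with h | h
  · rw [Set.not_nonempty_iff_eq_empty] at h
    refine not_in_compact κ hCcomp (Set.Iio (-1)) (fun r => ⟨-(|r|+2), ?_, ?_⟩)
      (fun t ht => hside U₁ h (show pt κ t ∈ U₁ from ht))
    · simp only [Set.mem_Iio]; have := abs_nonneg r; linarith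
    · rw [abs_neg, abs_of_nonneg (by positivity)]
      have := le_abs_self r; linarith
  · rw [Set.not_nonempty_iff_eq_empty] at h
    refine not_in_compact κ hCcomp (Set.Ioi (-1)) (fun r => ⟨|r|+2, ?_, ?_⟩)
      (fun t ht => hside U₂ h (show pt κ t ∈ U₂ from ht))
    · simp only [Set.mem_Ioi]; have := abs_nonneg r; linarith
    · rw [abs_of_nonneg (by positivity)]
      have := le_abs_self r; linarith

instance : Fact (finrank ℝ E3 = 2 + 1) := ⟨finrank_euclideanSpace_fin⟩

lemma sphere_compl_conn (v : Metric.sphere (0:E3) 1) :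
    IsConnected ({v}ᶜ : Set (Metric.sphere (0:E3) 1)) := by
  have h1 : IsConnected ((stereographic' 2 v).symm '' (stereographic' 2 v).target) := by
    apply IsConnected.image
    · rw [stereographic'_target]; exact ⟨⟨0, trivial⟩, isPreconnected_univ⟩
    · exact (stereographic' 2 v).symm.continuousOn
  rwa [(stereographic' 2 v).symm_image_target_eq_source, stereographic'_source] at h1

noncomputable def φ (κ : ℝ) (v : Metric.sphere (0:E3) 1) : ↥(Hall κ) :=
  ⟨((0:E3), (v:E3), (0:ℝ)), unit_mem κ v (mem_sphere_zero_iff_norm.mp v.2) 0⟩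

lemma φ_cont (κ : ℝ) : Continuous (φ κ) :=
  Continuous.subtype_mk
    (continuous_const.prodMk (continuous_subtype_val.prodMk continuous_const)) _

lemma φ_inj (κ : ℝ) : Function.Injective (φ κ) := by
  intro v w h
  have := congrArg (fun x : ↥(Hall κ) => (x : E3 × E3 × ℝ).2.1) h
  exact Subtype.ext this

lemma case_eq1 (κ : ℝ) (hκ : 0 < κ) (F : ↥(Hall κ) ≃ₜ ℝ) : False := by
  haveI : ConnectedSpace (Metric.sphere (0:E3) 1) := by
    apply Subtype.connectedSpace
    apply isConnected_sphere ?_ 0 zero_le_one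
    rw [← finrank_eq_rank, finrank_euclideanSpace_fin]
    exact_mod_cast one_lt_two.trans_le (by norm_num : (2:ℕ) ≤ 3)
  set S : Set ↥(Hall κ) := Set.range (φ κ) with hSdef
  have hSconn : IsPreconnected S := by
    rw [hSdef, ← Set.image_univ]
    exact (isConnected_univ.image _ (φ_cont κ).continuousOn).isPreconnected
  have key : ∀ a b : ℝ, a ∈ F '' S → b ∈ F '' S → a < b → False := by
    intro a b ha hb hab
    have hCpre : IsPreconnected (F '' S) := hSconn.image _ F.continuous.continuousOn
    have hord : Set.OrdConnected (F '' S) := hCpre.ordConnected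
    set m := (a + b) / 2 with hm
    have ham : a < m := by rw [hm]; linarith
    have hmb : m < b := by rw [hm]; linarith
    have hmC : m ∈ F '' S := hord.out ha hb ⟨ham.le, hmb.le⟩
    obtain ⟨p, hpS, hpm⟩ := hmC
    obtain ⟨v, rfl⟩ := hpS
    -- S minus the point φ v is still connected
    have himg : S \ {φ κ v} = φ κ '' ({v}ᶜ) := by
      ext x
      constructor
      · rintro ⟨⟨w, rfl⟩, hne⟩
        exact ⟨w, fun hw => hne (Set.mem_singleton_iff.mpr (by rw [Set.mem_singleton_iff.mp hw])), rfl⟩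
      · rintro ⟨w, hw, rfl⟩
        exact ⟨⟨w, rfl⟩, fun h => hw (Set.mem_singleton_iff.mpr (φ_inj κ h))⟩
    have hconn2 : IsPreconnected (S \ {φ κ v}) := by
      rw [himg]
      exact ((sphere_compl_conn v).image _ (φ_cont κ).continuousOn).isPreconnected
    have hDconn : IsPreconnected (F '' (S \ {φ κ v})) :=
      hconn2.image _ F.continuous.continuousOn
    have hDeq : F '' (S \ {φ κ v}) = (F '' S) \ {m} := by
      rw [Set.image_diff F.injective, Set.image_singleton, hpm]
    rw [hDeq] at hDconn
    have haD : a ∈ (F '' S) \ {m} := ⟨ha, fun h => absurd (Set.mem_singleton_iff.mp h ▸ ham) (lt_irrefl _)⟩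
    have hbD : b ∈ (F '' S) \ {m} := ⟨hb, fun h => absurd (Set.mem_singleton_iff.mp h ▸ hmb) (lt_irrefl _)⟩
    have hcov : (F '' S) \ {m} ⊆ Set.Iio m ∪ Set.Ioi m := by
      rintro x ⟨-, hx⟩
      rcases lt_trichotomy x m with h | h | h
      · exact Or.inl h
      · exact absurd (Set.mem_singleton_iff.mpr h) hx
      · exact Or.inr h
    obtain ⟨x, -, hx1, hx2⟩ := hDconn (Set.Iio m) (Set.Ioi m) isOpen_Iio isOpen_Ioi hcov
      ⟨a, haD, ham⟩ ⟨b, hbD, hmb⟩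
    exact absurd (show x < m from hx1) (not_lt_of_gt (show m < x from hx2))
  -- two distinct points in F '' S
  set v₁ : Metric.sphere (0:E3) 1 := ⟨e1, by simp [mem_sphere_zero_iff_norm, e1_norm]⟩
  set v₂ : Metric.sphere (0:E3) 1 := ⟨-e1, by simp [mem_sphere_zero_iff_norm, e1_norm]⟩
  have hv : v₁ ≠ v₂ := by
    intro h
    have : e1 = -e1 := congrArg Subtype.val h
    have he : ‖e1‖ = 0 := by
      have : e1 + e1 = 0 := by nth_rewrite 1 [this]; simp
      have h2 : (2:ℝ) • e1 = 0 := by rw [two_smul]; exact this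
      have := smul_eq_zero.mp h2
      rcases this with h | h
      · norm_num at h
      · rw [h, norm_zero]
    rw [e1_norm] at he; norm_num at he
  have hne : F (φ κ v₁) ≠ F (φ κ v₂) := fun h => hv (φ_inj κ (F.injective h))
  rcases hne.lt_or_gt with h | h
  · exact key _ _ ⟨φ κ v₁, ⟨v₁, rfl⟩, rfl⟩ ⟨φ κ v₂, ⟨v₂, rfl⟩, rfl⟩ h
  · exact key _ _ ⟨φ κ v₂, ⟨v₂, rfl⟩, rfl⟩ ⟨φ κ v₁, ⟨v₁, rfl⟩, rfl⟩ h

theorem stmt11 (κ : ℝ) (hκ : 0 < κ)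
    (V : Type*) [AddCommGroup V] [Module ℝ V] [FiniteDimensional ℝ V]
    [TopologicalSpace V] [IsTopologicalAddGroup V] [ContinuousSMul ℝ V] [T2Space V] :
    ¬ Nonempty (Hall κ ≃ₜ V) := by
  rintro ⟨f⟩
  rcases lt_or_ge (finrank ℝ V) 2 with h2 | h2
  · interval_cases h : finrank ℝ V
    · haveI : Subsingleton V := finrank_zero_iff.mp h
      have heq : f (pt κ 0) = f (pt κ 1) := Subsingleton.elim _ _
      have := congrArg (fun x : ↥(Hall κ) => (x : E3 × E3 × ℝ).2.2) (f.injective heq)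
      norm_num [pt] at this
    · have g : V ≃L[ℝ] ℝ := ContinuousLinearEquiv.ofFinrankEq (by rw [h, finrank_self])
      exact case_eq1 κ hκ (f.trans g.toHomeomorph)
  · have g : V ≃L[ℝ] EuclideanSpace ℝ (Fin (finrank ℝ V)) :=
      ContinuousLinearEquiv.ofFinrankEq (by rw [finrank_euclideanSpace_fin])
    exact case_ge2 κ hκ h2 (f.trans g.toHomeomorph)
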